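/- Let H be a Hopf algebra with bijective antipode S, equipped with an antilinear map * that is an algebra anti-automorphism, a coalgebra automorphism, and an involution, and define θ = S ∘ *. Let Φ = Σ Φ₁ ⊗ Φ₂ be a normalized twist for H satisfying Φ* = Φ⁻¹ (where * acts entrywise on the tensor factors). Define u = Σ (Φ⁻¹)₁ · S((Φ⁻¹)₂). Then θ(u) = u⁻¹, where u⁻¹ = Σ S(Φ₁)Φ₂. -/

import Mathlib

open TensorProduct

variable (k H : Type*) [Field k] [Ring H] [HopfAlgebra k H]


section AntipodeMul

open Coalgebra HopfAlgebra

variable {R A : Type*} [CommSemiring R] [Semiring A] [HopfAlgebra R A] {ι κ : Type*}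

/-- A representation of `comul (a*b)` from representations of `comul a` and `comul b`. -/
noncomputable def Coalgebra.Repr.mulRepr {a b : A} (ra : Coalgebra.Repr R a ι)
    (rb : Coalgebra.Repr R b κ) : Coalgebra.Repr R (a * b) (ι × κ) where
  index := ra.index ×ˢ rb.index
  left p := ra.left p.1 * rb.left p.2
  right p := ra.right p.1 * rb.right p.2
  eq := by
    rw [Bialgebra.comul_mul, ← ra.eq, ← rb.eq, Finset.sum_mul_sum, Finset.sum_product]
    simp [Algebra.TensorProduct.tmul_mul_tmul]

lemma Coalgebra.Repr.sum_counit_right_smul {a : A} (r : Coalgebra.Repr R a ι) :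
    ∑ i ∈ r.index, counit (R := R) (r.right i) • r.left i = a := by
  have h := congrArg (_root_.TensorProduct.rid R A) (Coalgebra.sum_tmul_counit_eq r)
  simpa only [map_sum, _root_.TensorProduct.rid_tmul, one_smul] using h

lemma Coalgebra.Repr.sum_counit_left_smul {a : A} (r : Coalgebra.Repr R a ι) :
    ∑ i ∈ r.index, counit (R := R) (r.left i) • r.right i = a := by
  have h := congrArg (_root_.TensorProduct.lid R A) (Coalgebra.sum_counit_tmul_eq r)
  simpa only [map_sum, _root_.TensorProduct.lid_tmul, one_smul] using h

/-- `∑ u * (v * (c₁ * (S c₂ * w))) = ε c • (u * (v * w))`. -/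
lemma helperA {c : A} (r : Coalgebra.Repr R c ι) (u v w : A) :
    ∑ l ∈ r.index, u * (v * (r.left l * (antipode (R := R) (r.right l) * w)))
      = counit (R := R) c • (u * (v * w)) := by
  rw [← Finset.mul_sum, ← Finset.mul_sum]
  have : ∑ l ∈ r.index, r.left l * (antipode (R := R) (r.right l) * w)
      = counit (R := R) c • w := by
    simp_rw [← mul_assoc]
    rw [← Finset.sum_mul, HopfAlgebra.sum_mul_antipode_eq_smul, smul_mul_assoc, one_mul]
  rw [this, mul_smul_comm, mul_smul_comm]

/-- `∑ ε c₂ • (S (x * c₁) * C) = S (x * c) * C`. -/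
lemma helperB {c : A} (r : Coalgebra.Repr R c ι) (x C : A) :
    ∑ k ∈ r.index, counit (R := R) (r.right k) • (antipode (R := R) (x * r.left k) * C)
      = antipode (R := R) (x * c) * C := by
  conv_rhs => rw [← r.sum_counit_right_smul, Finset.mul_sum, map_sum, Finset.sum_mul]
  refine Finset.sum_congr rfl fun k _ => ?_
  rw [mul_smul_comm, map_smul, smul_mul_assoc]

/-- `∑ S (x * c₁) * (c₂₁ * S c₂₂-style) collapse for the j-sum. -/
lemma helperJ {c : A} (r : Coalgebra.Repr R c ι) (x : A) :
    ∑ j ∈ r.index, x * (r.left j * antipode (R := R) (r.right j))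
      = counit (R := R) c • x := by
  rw [← Finset.mul_sum, HopfAlgebra.sum_mul_antipode_eq_smul, mul_smul_comm, mul_one]

/-- collapse for `∑ᵢ ε a₂ • S (a₁ * b)` -/
lemma helperI {a : A} (r : Coalgebra.Repr R a ι) (b : A) :
    ∑ i ∈ r.index, counit (R := R) (r.right i) • antipode (R := R) (r.left i * b)
      = antipode (R := R) (a * b) := by
  conv_rhs => rw [← r.sum_counit_right_smul, Finset.sum_mul, map_sum]
  refine Finset.sum_congr rfl fun i _ => ?_
  rw [smul_mul_assoc, map_smul]

/-- joint collapse `∑ⱼ∑ₗ S (c₁ d₁) * ((c₂ d₂) * D) = (ε c * ε d) • D`. -/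
lemma helperC {c d : A} (rc : Coalgebra.Repr R c ι) (rd : Coalgebra.Repr R d κ) (D : A) :
    ∑ j ∈ rc.index, ∑ l ∈ rd.index,
        antipode (R := R) (rc.left j * rd.left l) * ((rc.right j * rd.right l) * D)
      = (counit (R := R) c * counit (R := R) d) • D := by
  have key : ∑ j ∈ rc.index, ∑ l ∈ rd.index,
      antipode (R := R) (rc.left j * rd.left l) * (rc.right j * rd.right l)
      = counit (R := R) (c * d) • (1 : A) := by
    rw [← Finset.sum_product']
    exact HopfAlgebra.sum_antipode_mul_eq_smul (rc.mulRepr rd)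
  have assoc : ∀ j l, antipode (R := R) (rc.left j * rd.left l) *
        ((rc.right j * rd.right l) * D)
      = (antipode (R := R) (rc.left j * rd.left l) * (rc.right j * rd.right l)) * D :=
    fun j l => (mul_assoc _ _ _).symm
  simp_rw [assoc, ← Finset.sum_mul]
  rw [key, smul_mul_assoc, one_mul, Bialgebra.counit_mul]

/-- `∑ₖ ε d₁ • (S d₂ * C) = S d * C`. -/
lemma helperD {d : A} (r : Coalgebra.Repr R d ι) (C : A) :
    ∑ k ∈ r.index, counit (R := R) (r.left k) • (antipode (R := R) (r.right k) * C)
      = antipode (R := R) d * C := by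
  conv_rhs => rw [← r.sum_counit_left_smul, map_sum, Finset.sum_mul]
  refine Finset.sum_congr rfl fun k _ => ?_
  rw [map_smul, smul_mul_assoc]

/-- `∑ᵢ ε a₁ • (C * S a₂) = C * S a`. -/
lemma helperE {a : A} (r : Coalgebra.Repr R a ι) (C : A) :
    ∑ i ∈ r.index, counit (R := R) (r.left i) • (C * antipode (R := R) (r.right i))
      = C * antipode (R := R) a := by
  conv_rhs => rw [← r.sum_counit_left_smul, map_sum, Finset.mul_sum]
  refine Finset.sum_congr rfl fun i _ => ?_
  rw [map_smul, mul_smul_comm]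

/-- The 6-linear evaluation map used in the proof of anti-multiplicativity. -/
noncomputable def hopfN : (A ⊗[R] (A ⊗[R] A)) ⊗[R] (A ⊗[R] (A ⊗[R] A)) →ₗ[R] A :=
  LinearMap.mul' R A ∘ₗ
    TensorProduct.map
      (HopfAlgebra.antipode (R := R) ∘ₗ LinearMap.mul' R A)
      (LinearMap.mul' R A ∘ₗ
        TensorProduct.map (LinearMap.mul' R A)
          (LinearMap.mul' R A ∘ₗ
            TensorProduct.map (HopfAlgebra.antipode (R := R)) (HopfAlgebra.antipode (R := R)) ∘ₗ
            (TensorProduct.comm R A A).toLinearMap) ∘ₗ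
        (TensorProduct.tensorTensorTensorComm R A A A A).toLinearMap) ∘ₗ
    (TensorProduct.tensorTensorTensorComm R A (A ⊗[R] A) A (A ⊗[R] A)).toLinearMap

lemma hopfN_tmul (x y z p q r : A) :
    hopfN (R := R) ((x ⊗ₜ (y ⊗ₜ z)) ⊗ₜ (p ⊗ₜ (q ⊗ₜ r))) =
      antipode (R := R) (x * p) *
        ((y * q) * (antipode (R := R) r * antipode (R := R) z)) := by
  simp [hopfN]

theorem antipode_mul_anti (a b : A) :
    antipode (R := R) (a * b) = antipode (R := R) b * antipode (R := R) a := by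
  classical
  set ra := Coalgebra.Repr.arbitrary R a with hra
  set rb := Coalgebra.Repr.arbitrary R b with hrb
  set ra1 : ∀ i : ra.ι, Coalgebra.Repr R (ra.left i) (A × A) :=
    fun i => Coalgebra.Repr.arbitrary R _ with hra1
  set ra2 : ∀ i : ra.ι, Coalgebra.Repr R (ra.right i) (A × A) :=
    fun i => Coalgebra.Repr.arbitrary R _ with hra2
  set rb1 : ∀ k : rb.ι, Coalgebra.Repr R (rb.left k) (A × A) :=
    fun k => Coalgebra.Repr.arbitrary R _ with hrb1
  set rb2 : ∀ k : rb.ι, Coalgebra.Repr R (rb.right k) (A × A) :=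
    fun k => Coalgebra.Repr.arbitrary R _ with hrb2
  have hXa := Coalgebra.sum_tmul_tmul_eq ra ra1 ra2
  have hYb := Coalgebra.sum_tmul_tmul_eq rb rb1 rb2
  -- the element `E`
  have E1 : hopfN (R := R)
      ((∑ i ∈ ra.index, ∑ j ∈ (ra2 i).index,
          ra.left i ⊗ₜ[R] ((ra2 i).left j ⊗ₜ[R] (ra2 i).right j)) ⊗ₜ[R]
       (∑ k ∈ rb.index, ∑ l ∈ (rb2 k).index,
          rb.left k ⊗ₜ[R] ((rb2 k).left l ⊗ₜ[R] (rb2 k).right l)))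
      = antipode (R := R) (a * b) := by
    rw [TensorProduct.sum_tmul]
    simp_rw [TensorProduct.sum_tmul, TensorProduct.tmul_sum, map_sum, hopfN_tmul]
    simp_rw [mul_assoc]
    -- innermost l-sum
    simp_rw [helperA (R := R)]
    -- now: ∑ i ∑ j ∑ k ε (rb.right k) • (S (ra.left i * rb.left k) * ((ra2 i).left j * S ((ra2 i).right j)))
    simp_rw [helperB (R := R)]
    -- now: ∑ i ∑ j S (ra.left i * b) * ((ra2 i).left j * S ((ra2 i).right j))
    simp_rw [helperJ (R := R)]
    -- now: ∑ i ε (ra.right i) • S (ra.left i * b)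
    simp_rw [helperI (R := R)]
  have E2 : hopfN (R := R)
      ((∑ i ∈ ra.index, ∑ j ∈ (ra1 i).index,
          (ra1 i).left j ⊗ₜ[R] ((ra1 i).right j ⊗ₜ[R] ra.right i)) ⊗ₜ[R]
       (∑ k ∈ rb.index, ∑ l ∈ (rb1 k).index,
          (rb1 k).left l ⊗ₜ[R] ((rb1 k).right l ⊗ₜ[R] rb.right k)))
      = antipode (R := R) b * antipode (R := R) a := by
    rw [TensorProduct.sum_tmul]
    simp_rw [TensorProduct.sum_tmul, TensorProduct.tmul_sum, map_sum, hopfN_tmul]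
    -- reorder: ∑ i ∑ j ∑ k ∑ l  ↦  ∑ i ∑ k ∑ j ∑ l
    conv_lhs => enter [2, i]; rw [Finset.sum_comm]
    -- inner (j,l)-collapse
    simp_rw [helperC (R := R)]
    simp_rw [mul_smul]
    simp_rw [← Finset.smul_sum]
    simp_rw [helperD (R := R)]
    simp_rw [helperE (R := R)]
  rw [← E1, ← hXa, ← hYb, E2]

end AntipodeMul

/-- `ε ⊗ id : H ⊗ H → H`. -/
noncomputable def epsId : H ⊗[k] H →ₗ[k] H :=
  (TensorProduct.lid k H).toLinearMap ∘ₗ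
    TensorProduct.map (Coalgebra.counit : H →ₗ[k] k) LinearMap.id

/-- `id ⊗ ε : H ⊗ H → H`. -/
noncomputable def idEps : H ⊗[k] H →ₗ[k] H :=
  (TensorProduct.rid k H).toLinearMap ∘ₗ
    TensorProduct.map LinearMap.id (Coalgebra.counit : H →ₗ[k] k)

/-- The twist (2-cocycle) equation `(Δ ⊗ id)(Φ)·Φ₁₂ = (id ⊗ Δ)(Φ)·Φ₂₃`. -/
noncomputable def IsTwist (Φ : H ⊗[k] H) : Prop :=
  (Algebra.TensorProduct.assoc k k k H H H)
      ((Algebra.TensorProduct.map (Bialgebra.comulAlgHom k H) (AlgHom.id k H)) Φ *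
        (Φ ⊗ₜ[k] (1 : H)))
    = (Algebra.TensorProduct.map (AlgHom.id k H) (Bialgebra.comulAlgHom k H)) Φ *
        ((1 : H) ⊗ₜ[k] Φ)

/-- Lemma 1 of the paper: if `*` is an antilinear involutive
algebra anti-automorphism and coalgebra automorphism of a Hopf algebra `H`
over `ℂ` with bijective antipode `S` satisfying `S∘* = *∘S⁻¹`, and `Φ` is a
normalized twist with `Φ* = Φ⁻¹`, then for `u = Σ (Φ⁻¹)₁ S((Φ⁻¹)₂)` and
`θ = S∘*` one has `θ(u) = u⁻¹ = Σ S(Φ₁)Φ₂`. -/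
theorem theta_of_u {H : Type*} [Ring H] [HopfAlgebra ℂ H]
    (s : H →+ H)
    (hs_anti : ∀ x y : H, s (x * y) = s y * s x)
    (hs_invol : ∀ x : H, s (s x) = x)
    (hs_smul : ∀ (c : ℂ) (x : H), s (c • x) = (starRingEnd ℂ c) • s x)
    (hs_counit : ∀ x : H,
      Coalgebra.counit (R := ℂ) (s x) = starRingEnd ℂ (Coalgebra.counit (R := ℂ) x))
    -- `* ⊗ *` on `H ⊗ H`:
    (S₂ : H ⊗[ℂ] H →+ H ⊗[ℂ] H)
    (hS₂ : ∀ x y : H, S₂ (x ⊗ₜ[ℂ] y) = s x ⊗ₜ[ℂ] s y)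
    -- `*` is a coalgebra automorphism: `Δ(x*) = (*⊗*)(Δ x)`:
    (hs_comul : ∀ x : H, Coalgebra.comul (R := ℂ) (s x) = S₂ (Coalgebra.comul x))
    -- `S` is bijective and `S∘* = *∘S⁻¹` (equivalently `S(*(S x)) = *(x)`):
    (hS_bij : Function.Bijective (HopfAlgebra.antipode (R := ℂ) (A := H)))
    (hSs : ∀ x : H,
      HopfAlgebra.antipode (R := ℂ) (s (HopfAlgebra.antipode (R := ℂ) x)) = s x)
    -- the twist, normalized, with `Φ* = Φ⁻¹`:
    (Φ : (H ⊗[ℂ] H)ˣ)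
    (htwist : IsTwist ℂ H (Φ : H ⊗[ℂ] H))
    (hnorm₁ : epsId ℂ H (Φ : H ⊗[ℂ] H) = 1)
    (hnorm₂ : idEps ℂ H (Φ : H ⊗[ℂ] H) = 1)
    (hreal : S₂ (Φ : H ⊗[ℂ] H) = (↑Φ⁻¹ : H ⊗[ℂ] H)) :
    HopfAlgebra.antipode (R := ℂ)
        (s (LinearMap.mul' ℂ H
          ((TensorProduct.map LinearMap.id (HopfAlgebra.antipode (R := ℂ)))
            (↑Φ⁻¹ : H ⊗[ℂ] H)))) =
      LinearMap.mul' ℂ H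
        ((TensorProduct.map (HopfAlgebra.antipode (R := ℂ)) LinearMap.id)
          (Φ : H ⊗[ℂ] H)) := by
  have key : ∀ t : H ⊗[ℂ] H,
      HopfAlgebra.antipode (R := ℂ)
          (s (LinearMap.mul' ℂ H
            ((TensorProduct.map LinearMap.id (HopfAlgebra.antipode (R := ℂ))) (S₂ t)))) =
        LinearMap.mul' ℂ H
          ((TensorProduct.map (HopfAlgebra.antipode (R := ℂ)) LinearMap.id) t) := by
    intro t
    induction t using TensorProduct.induction_on with
    | zero => simp
    | tmul x y =>
      rw [hS₂]
      simp only [TensorProduct.map_tmul, LinearMap.id_coe, id_eq, LinearMap.mul'_apply]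
      rw [hs_anti, hs_invol, antipode_mul_anti, hSs, hs_invol]
    | add u v hu hv =>
      simp only [map_add, hu, hv]
  rw [← hreal]
  exact key (Φ : H ⊗[ℂ] H)
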